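/- For all n ≥ 1, the subword complexity of the Thue–Morse word satisfies p_t(n+1) − p_t(n) ≤ 4. -/
import Mathlib


/-- The Thue–Morse word: `t n = s₂(n) mod 2`, where `s₂(n)` is the sum of the
binary digits of `n`. -/
def thueMorse (n : ℕ) : ℕ := (Nat.digits 2 n).sum % 2

/-- The subword complexity of the infinite word `w`: the number of distinct
contiguous subwords (factors) of `w` of length `n`, a factor of length `n`
being identified with the function `Fin n → ℕ` giving its letters. -/
noncomputable def complexity (w : ℕ → ℕ) (n : ℕ) : ℕ :=
  Set.ncard {f : Fin n → ℕ | ∃ i : ℕ, ∀ j : Fin n, f j = w (i + j)}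

set_option maxHeartbeats 1000000
namespace TM
abbrev t := thueMorse

lemma t_le_one (n : ℕ) : t n ≤ 1 := Nat.lt_succ_iff.mp (Nat.mod_lt _ (by norm_num))

lemma t_mul2 (n : ℕ) : t (2 * n) = t n := by
  rcases Nat.eq_zero_or_pos n with h | h
  · subst h; rfl
  · show (Nat.digits 2 (2*n)).sum % 2 = _
    rw [Nat.digits_def' (by norm_num : 1 < 2) (by omega)]
    have h1 : 2 * n % 2 = 0 := by omega
    have h2 : 2 * n / 2 = n := by omega
    rw [h1, h2]
    simp [thueMorse]

lemma t_mul2' (n : ℕ) : t (2 * n + 1) = 1 - t n := by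
  have key : t (2*n+1) = (1 + (Nat.digits 2 n).sum) % 2 := by
    show (Nat.digits 2 (2*n+1)).sum % 2 = _
    rw [Nat.digits_def' (by norm_num : 1 < 2) (by omega)]
    have h1 : (2 * n + 1) % 2 = 1 := by omega
    have h2 : (2 * n + 1) / 2 = n := by omega
    rw [h1, h2]; simp
  have h3 : t n = (Nat.digits 2 n).sum % 2 := rfl
  omega

lemma no3 (i : ℕ) : ¬ (t i = t (i+1) ∧ t (i+1) = t (i+2)) := by
  rintro ⟨h1, h2⟩
  rcases Nat.even_or_odd i with ⟨m, rfl⟩ | ⟨m, rfl⟩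
  · have e1 : m + m = 2 * m := by ring
    have := t_mul2 m; have := t_mul2' m
    have := t_le_one m
    rw [e1] at h1
    omega
  · have e1 : 2*m+1+1 = 2*(m+1) := by ring
    have e2 : 2*m+1+2 = 2*(m+1)+1 := by ring
    rw [e1, e2] at h2
    have := t_mul2 (m+1); have := t_mul2' (m+1)
    have := t_le_one (m+1)
    omega

lemma parity4_aux {i j : ℕ} (hi : i % 2 = 0) (hj : j % 2 = 1)
    (h0 : t i = t j) (h1 : t (i+1) = t (j+1)) (h2 : t (i+2) = t (j+2))
    (h3 : t (i+3) = t (j+3)) : False := by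
  obtain ⟨m, rfl⟩ : ∃ m, i = 2*m := ⟨i/2, by omega⟩
  obtain ⟨k, rfl⟩ : ∃ k, j = 2*k+1 := ⟨j/2, by omega⟩
  have e1 : 2*m+2 = 2*(m+1) := by ring
  have e2 : 2*m+3 = 2*(m+1)+1 := by ring
  have e3 : 2*k+1+1 = 2*(k+1) := by ring
  have e4 : 2*k+1+2 = 2*(k+1)+1 := by ring
  have e5 : 2*k+1+3 = 2*(k+2) := by ring
  rw [e1] at h2; rw [e2] at h3; rw [e3] at h1; rw [e4] at h2; rw [e5] at h3
  have a1 := t_mul2 m; have a2 := t_mul2' m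
  have a3 := t_mul2 (m+1); have a4 := t_mul2' (m+1)
  have b1 := t_mul2 k; have b2 := t_mul2' k
  have b3 := t_mul2 (k+1); have b4 := t_mul2' (k+1)
  have b5 := t_mul2 (k+2)
  have c1 := t_le_one m; have c2 := t_le_one (m+1)
  have c3 := t_le_one k; have c4 := t_le_one (k+1); have c5 := t_le_one (k+2)
  exact no3 k (by omega)

lemma parity4 {i j : ℕ}
    (h0 : t i = t j) (h1 : t (i+1) = t (j+1)) (h2 : t (i+2) = t (j+2))
    (h3 : t (i+3) = t (j+3)) : i % 2 = j % 2 := by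
  rcases Nat.eq_zero_or_pos (i % 2) with hi | hi <;>
    rcases Nat.eq_zero_or_pos (j % 2) with hj | hj
  · omega
  · exact absurd (parity4_aux hi (by omega) h0 h1 h2 h3) not_false
  · exact absurd (parity4_aux hj (by omega) h0.symm h1.symm h2.symm h3.symm) not_false
  · omega

def Occ (m : ℕ) (f : Fin m → ℕ) (i : ℕ) : Prop := ∀ j : Fin m, f j = t (i + j)

def F (m : ℕ) : Set (Fin m → ℕ) := {f | ∃ i, Occ m f i}

def RS (m : ℕ) : Set (Fin m → ℕ) :=
  {f | (∃ i, Occ m f i ∧ t (i + m) = 0) ∧ (∃ i, Occ m f i ∧ t (i + m) = 1)}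

def QS (m : ℕ) : Set (ℕ × (Fin m → ℕ)) :=
  {p | (∃ i, t i = p.1 ∧ Occ m p.2 (i+1) ∧ t (i + 1 + m) = 0) ∧
       (∃ i, t i = p.1 ∧ Occ m p.2 (i+1) ∧ t (i + 1 + m) = 1)}

lemma occ_apply {m : ℕ} {f : Fin m → ℕ} {i : ℕ} (h : Occ m f i) (l : ℕ) (hl : l < m) :
    f ⟨l, hl⟩ = t (i + l) := h ⟨l, hl⟩

def Big (m : ℕ) : Set (Fin m → ℕ) := {f | ∀ j, f j ≤ 1}

lemma Big_finite (m : ℕ) : (Big m).Finite := by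
  apply Set.Finite.subset (Set.finite_range (fun g : Fin m → Fin 2 => fun j => ((g j : ℕ))))
  intro f hf
  refine ⟨fun j => ⟨f j, by have := hf j; omega⟩, ?_⟩
  funext j; rfl

lemma F_subset_Big (m : ℕ) : F m ⊆ Big m := by
  rintro f ⟨i, hi⟩ j
  rw [hi j]; exact t_le_one _

lemma F_finite (m : ℕ) : (F m).Finite := (Big_finite m).subset (F_subset_Big m)

lemma RS_subset_F (m : ℕ) : RS m ⊆ F m := by
  rintro f ⟨⟨i, hi, _⟩, _⟩; exact ⟨i, hi⟩

lemma RS_finite (m : ℕ) : (RS m).Finite := (F_finite m).subset (RS_subset_F m)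

lemma QS_finite (m : ℕ) : (QS m).Finite := by
  apply Set.Finite.subset (Set.Finite.prod (Set.finite_Icc 0 1) (Big_finite m))
  rintro ⟨c, v⟩ ⟨⟨i, hc, hv, _⟩, _⟩
  constructor
  · simp only [Set.mem_Icc]; have := t_le_one i; omega
  · intro j; rw [hv j]; exact t_le_one _

lemma no3' {a b c : ℕ} (hab : b = a + 1) (hbc : c = a + 2) (h1 : t a = t b)
    (h2 : t b = t c) : False := by
  subst hab hbc; exact no3 a ⟨h1, h2⟩

lemma ncard_quad_le {α : Type*} (a b c d : α) : ({a, b, c, d} : Set α).ncard ≤ 4 := by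
  have h1 : ({d} : Set α).ncard = 1 := Set.ncard_singleton d
  have h2 := Set.ncard_insert_le c ({d} : Set α)
  have h3 := Set.ncard_insert_le b ({c, d} : Set α)
  have h4 := Set.ncard_insert_le a ({b, c, d} : Set α)
  omega

lemma quad_finite {α : Type*} (a b c d : α) : ({a, b, c, d} : Set α).Finite :=
  (((Set.finite_singleton d).insert c).insert b).insert a

lemma RS1_bound : (RS 1).ncard ≤ 4 := by
  have hsub : RS 1 ⊆ {![0], ![0], ![1], ![1]} := by
    rintro v ⟨⟨i, hi, -⟩, -⟩
    have h0 : v ⟨0, by omega⟩ = t (i + 0) := occ_apply hi 0 (by omega)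
    have hle := t_le_one (i + 0)
    rcases Nat.le_one_iff_eq_zero_or_eq_one.mp (h0 ▸ hle) with h | h
    · left; funext j; fin_cases j; simpa using h
    · right; right; left; funext j; fin_cases j; simpa using h
  exact le_trans (Set.ncard_le_ncard hsub (quad_finite _ _ _ _)) (ncard_quad_le _ _ _ _)

lemma RS2_bound : (RS 2).ncard ≤ 4 := by
  have hsub : RS 2 ⊆ {![0,0], ![0,1], ![1,0], ![1,1]} := by
    rintro v ⟨⟨i, hi, -⟩, -⟩
    have h0 : v ⟨0, by omega⟩ = t (i + 0) := occ_apply hi 0 (by omega)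
    have h1 : v ⟨1, by omega⟩ = t (i + 1) := occ_apply hi 1 (by omega)
    have g0 := t_le_one (i + 0); have g1 := t_le_one (i + 1)
    have hv0 : v ⟨0, by omega⟩ = 0 ∨ v ⟨0, by omega⟩ = 1 := by omega
    have hv1 : v ⟨1, by omega⟩ = 0 ∨ v ⟨1, by omega⟩ = 1 := by omega
    rcases hv0 with h | h <;> rcases hv1 with h' | h'
    · left; funext j; fin_cases j <;> simp_all
    · right; left; funext j; fin_cases j <;> simp_all
    · right; right; left; funext j; fin_cases j <;> simp_all
    · right; right; right; funext j; fin_cases j <;> simp_all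
  exact le_trans (Set.ncard_le_ncard hsub (quad_finite _ _ _ _)) (ncard_quad_le _ _ _ _)

lemma RS3_bound : (RS 3).ncard ≤ 4 := by
  have hsub : RS 3 ⊆ {![0,0,1], ![1,0,1], ![0,1,0], ![1,1,0]} := by
    rintro v ⟨⟨i, hi, hi0⟩, ⟨i', hi', hi1⟩⟩
    have h0 : v ⟨0, by omega⟩ = t (i + 0) := occ_apply hi 0 (by omega)
    have h1 : v ⟨1, by omega⟩ = t (i + 1) := occ_apply hi 1 (by omega)
    have h2 : v ⟨2, by omega⟩ = t (i + 2) := occ_apply hi 2 (by omega)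
    have h1' : v ⟨1, by omega⟩ = t (i' + 1) := occ_apply hi' 1 (by omega)
    have h2' : v ⟨2, by omega⟩ = t (i' + 2) := occ_apply hi' 2 (by omega)
    have g0 := t_le_one (i + 0); have g1 := t_le_one (i + 1); have g2 := t_le_one (i + 2)
    have hne : v ⟨1, by omega⟩ ≠ v ⟨2, by omega⟩ := by
      intro heq
      rcases (by omega : v ⟨2, by omega⟩ = 0 ∨ v ⟨2, by omega⟩ = 1) with h | h
      · exact no3' (a := i+1) (b := i+2) (c := i+3) (by omega) (by omega) (by omega : t (i+1) = t (i+2))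
          (by rw [← h2, h]; omega)
      · exact no3' (a := i'+1) (b := i'+2) (c := i'+3) (by omega) (by omega) (by omega : t (i'+1) = t (i'+2))
          (by rw [← h2', h]; omega)
    have hv0 : v ⟨0, by omega⟩ = 0 ∨ v ⟨0, by omega⟩ = 1 := by omega
    rcases hv0 with h | h <;> rcases (by omega : v ⟨1, by omega⟩ = 0 ∨ v ⟨1, by omega⟩ = 1) with h' | h'
    · left; funext j; fin_cases j <;> simp_all <;> omega
    · right; right; left; funext j; fin_cases j <;> simp_all <;> omega
    · right; left; funext j; fin_cases j <;> simp_all <;> omega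
    · right; right; right; funext j; fin_cases j <;> simp_all <;> omega
  exact le_trans (Set.ncard_le_ncard hsub (quad_finite _ _ _ _)) (ncard_quad_le _ _ _ _)

set_option linter.unreachableTactic false
set_option linter.unusedTactic false
set_option linter.unnecessarySeqFocus false

lemma occ_apply' {m : ℕ} {f : Fin m → ℕ} {i : ℕ} (h : Occ m f i) (l : ℕ) (hl : l < m)
    {r : ℕ} (hr : r = i + l) : f ⟨l, hl⟩ = t r := by rw [hr]; exact h ⟨l, hl⟩

lemma t_shift {a b x : ℕ} (h : t a = x) (e : b = a) : t b = x := by rw [e, h]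

lemma QS1_bound : (QS 1).ncard ≤ 4 := by
  have hsub : QS 1 ⊆ {(0,![0]), (0,![1]), (1,![0]), (1,![1])} := by
    rintro ⟨c, v⟩ ⟨⟨i, hc, hv, -⟩, -⟩
    have h0 : v ⟨0, by omega⟩ = t (i + 1) := occ_apply' hv 0 (by omega) (by omega)
    have g0 := t_le_one (i + 1); have gc := t_le_one i
    have hveq : v = ![0] ∨ v = ![1] := by
      rcases (by omega : v ⟨0, by omega⟩ = 0 ∨ v ⟨0, by omega⟩ = 1) with h | h
      · left; funext j; fin_cases j; simpa using h
      · right; funext j; fin_cases j; simpa using h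
    rcases (by omega : c = 0 ∨ c = 1) with rfl | rfl <;> rcases hveq with rfl | rfl <;> simp
  exact le_trans (Set.ncard_le_ncard hsub (quad_finite _ _ _ _)) (ncard_quad_le _ _ _ _)

lemma QS2_bound : (QS 2).ncard ≤ 4 := by
  have hsub : QS 2 ⊆ {(0,![0,1]), (0,![1,0]), (1,![0,1]), (1,![1,0])} := by
    rintro ⟨c, v⟩ ⟨⟨i, hc, hv, hx0⟩, ⟨i', hc', hv', hx1⟩⟩
    have h0 : v ⟨0, by omega⟩ = t (i + 1) := occ_apply' hv 0 (by omega) (by omega)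
    have h1 : v ⟨1, by omega⟩ = t (i + 2) := occ_apply' hv 1 (by omega) (by omega)
    have h0' : v ⟨0, by omega⟩ = t (i' + 1) := occ_apply' hv' 0 (by omega) (by omega)
    have h1' : v ⟨1, by omega⟩ = t (i' + 2) := occ_apply' hv' 1 (by omega) (by omega)
    have e0 : t (i + 3) = 0 := t_shift hx0 (by omega)
    have e1 : t (i' + 3) = 1 := t_shift hx1 (by omega)
    have g0 := t_le_one (i + 1); have g1 := t_le_one (i + 2); have gc := t_le_one i
    have hne : v ⟨0, by omega⟩ ≠ v ⟨1, by omega⟩ := by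
      intro heq
      rcases (by omega : v ⟨1, by omega⟩ = 0 ∨ v ⟨1, by omega⟩ = 1) with h | h
      · exact no3' (a := i+1) (b := i+2) (c := i+3) (by omega) (by omega)
          (by omega) (by omega)
      · exact no3' (a := i'+1) (b := i'+2) (c := i'+3) (by omega) (by omega)
          (by omega) (by omega)
    have hveq : v = ![0,1] ∨ v = ![1,0] := by
      rcases (by omega : v ⟨0, by omega⟩ = 0 ∨ v ⟨0, by omega⟩ = 1) with h | h
      · left; funext j; fin_cases j <;> simp_all <;> omega
      · right; funext j; fin_cases j <;> simp_all <;> omega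
    rcases (by omega : c = 0 ∨ c = 1) with rfl | rfl <;> rcases hveq with rfl | rfl <;> simp
  exact le_trans (Set.ncard_le_ncard hsub (quad_finite _ _ _ _)) (ncard_quad_le _ _ _ _)

lemma parity4' {i j : ℕ} (h : ∀ l, l < 4 → t (i + l) = t (j + l)) : i % 2 = j % 2 := by
  have h0 := h 0 (by omega); have h1 := h 1 (by omega)
  have h2 := h 2 (by omega); have h3 := h 3 (by omega)
  rw [Nat.add_zero, Nat.add_zero] at h0
  exact parity4 h0 h1 h2 h3

lemma occ_parity {m : ℕ} (hm : 4 ≤ m) {w : Fin m → ℕ} {i j : ℕ}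
    (hi : Occ m w i) (hj : Occ m w j) : i % 2 = j % 2 := by
  apply parity4'
  intro l hl
  rw [← occ_apply hi l (by omega), occ_apply hj l (by omega)]

lemma RS_even_occ {k : ℕ} (hk : 2 ≤ k) {w : Fin (2*k) → ℕ} (hw : w ∈ RS (2*k)) :
    ∃ m m',
      ((∀ l (h2l : 2*l < 2*k) (h2l1 : 2*l+1 < 2*k),
          w ⟨2*l, h2l⟩ = t (m + l) ∧ w ⟨2*l+1, h2l1⟩ = 1 - t (m + l)) ∧ t (m + k) = 0) ∧
      ((∀ l (h2l : 2*l < 2*k) (h2l1 : 2*l+1 < 2*k),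
          w ⟨2*l, h2l⟩ = t (m' + l) ∧ w ⟨2*l+1, h2l1⟩ = 1 - t (m' + l)) ∧ t (m' + k) = 1) := by
  obtain ⟨⟨i, hi, hi0⟩, ⟨j, hj, hj1⟩⟩ := hw
  have hp : i % 2 = j % 2 := occ_parity (by omega) hi hj
  -- rule out odd
  have hodd : i % 2 ≠ 1 := by
    intro h
    obtain ⟨m, rfl⟩ : ∃ m, i = 2*m+1 := ⟨i/2, by omega⟩
    obtain ⟨m', rfl⟩ : ∃ m', j = 2*m'+1 := ⟨j/2, by omega⟩
    have ha : w ⟨2*k-1, by omega⟩ = t (m + k) := by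
      refine (occ_apply hi (2*k-1) (by omega)).trans ?_
      have e : 2*m+1 + (2*k-1) = 2*(m+k) := by omega
      rw [e, t_mul2]
    have hb : w ⟨2*k-1, by omega⟩ = t (m' + k) := by
      refine (occ_apply hj (2*k-1) (by omega)).trans ?_
      have e : 2*m'+1 + (2*k-1) = 2*(m'+k) := by omega
      rw [e, t_mul2]
    have hia : t (2*m+1 + 2*k) = 1 - t (m+k) := by
      have e : 2*m+1 + 2*k = 2*(m+k)+1 := by omega
      rw [e, t_mul2']
    have hja : t (2*m'+1 + 2*k) = 1 - t (m'+k) := by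
      have e : 2*m'+1 + 2*k = 2*(m'+k)+1 := by omega
      rw [e, t_mul2']
    have l1 := t_le_one (m+k); have l2 := t_le_one (m'+k)
    omega
  obtain ⟨m, rfl⟩ : ∃ m, i = 2*m := ⟨i/2, by omega⟩
  obtain ⟨m', rfl⟩ : ∃ m', j = 2*m' := ⟨j/2, by omega⟩
  have key : ∀ (m₀ : ℕ) (h : Occ (2*k) w (2*m₀)) (l : ℕ) (h2l : 2*l < 2*k)
      (h2l1 : 2*l+1 < 2*k), w ⟨2*l, h2l⟩ = t (m₀ + l) ∧ w ⟨2*l+1, h2l1⟩ = 1 - t (m₀ + l) := by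
    intro m₀ h l h2l h2l1
    constructor
    · refine (occ_apply h (2*l) h2l).trans ?_
      have e : 2*m₀ + 2*l = 2*(m₀+l) := by omega
      rw [e, t_mul2]
    · refine (occ_apply h (2*l+1) h2l1).trans ?_
      have e : 2*m₀ + (2*l+1) = 2*(m₀+l)+1 := by omega
      rw [e, t_mul2']
  refine ⟨m, m', ⟨key m hi, ?_⟩, ⟨key m' hj, ?_⟩⟩
  · have e : 2*m + 2*k = 2*(m+k) := by omega
    rw [e, t_mul2] at hi0; exact hi0
  · have e : 2*m' + 2*k = 2*(m'+k) := by omega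
    rw [e, t_mul2] at hj1; exact hj1

lemma RS_even_le {k : ℕ} (hk : 2 ≤ k) : (RS (2*k)).ncard ≤ (RS k).ncard := by
  refine Set.ncard_le_ncard_of_injOn
    (fun w => fun l : Fin k => w ⟨2*(l : ℕ), by have := l.2; omega⟩) ?_ ?_ (RS_finite k)
  · intro w hw
    obtain ⟨m, m', ⟨hm, hm0⟩, ⟨hm', hm1⟩⟩ := RS_even_occ hk hw
    constructor
    · exact ⟨m, fun l => (hm l (by have := l.2; omega) (by have := l.2; omega)).1, hm0⟩
    · exact ⟨m', fun l => (hm' l (by have := l.2; omega) (by have := l.2; omega)).1, hm1⟩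
  · intro w hw w' hw' heq
    obtain ⟨m, m', ⟨hm, hm0⟩, -⟩ := RS_even_occ hk hw
    obtain ⟨n, n', ⟨hn, hn0⟩, -⟩ := RS_even_occ hk hw'
    funext j
    obtain ⟨jv, hjv⟩ := j
    have heven : ∀ (l : ℕ) (h2l : 2*l < 2*k), w ⟨2*l, h2l⟩ = w' ⟨2*l, h2l⟩ := by
      intro l h2l
      have := congrFun heq ⟨l, by omega⟩
      simpa using this
    rcases Nat.even_or_odd jv with ⟨l, hl⟩ | ⟨l, hl⟩
    · have e : jv = 2*l := by omega
      subst e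
      exact heven l hjv
    · have e : jv = 2*l+1 := by omega
      subst e
      have a1 := (hm l (by omega) (by omega)).1
      have a2 := (hm l (by omega) (by omega)).2
      have b1 := (hn l (by omega) (by omega)).1
      have b2 := (hn l (by omega) (by omega)).2
      have := heven l (by omega)
      omega

lemma RS_odd_occ {k : ℕ} (hk : 2 ≤ k) {w : Fin (2*k+1) → ℕ} (hw : w ∈ RS (2*k+1)) :
    ∃ m m',
      ((w ⟨0, by omega⟩ = 1 - t m ∧
        (∀ l (h1 : 1+2*l < 2*k+1) (h2 : 2+2*l < 2*k+1),
          w ⟨1+2*l, h1⟩ = t (m+1+l) ∧ w ⟨2+2*l, h2⟩ = 1 - t (m+1+l)) ∧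
        t (m+1+k) = 0)) ∧
      ((w ⟨0, by omega⟩ = 1 - t m' ∧
        (∀ l (h1 : 1+2*l < 2*k+1) (h2 : 2+2*l < 2*k+1),
          w ⟨1+2*l, h1⟩ = t (m'+1+l) ∧ w ⟨2+2*l, h2⟩ = 1 - t (m'+1+l)) ∧
        t (m'+1+k) = 1)) := by
  obtain ⟨⟨i, hi, hi0⟩, ⟨j, hj, hj1⟩⟩ := hw
  have hp : i % 2 = j % 2 := occ_parity (by omega) hi hj
  have hodd : i % 2 ≠ 0 := by
    intro h
    obtain ⟨m, rfl⟩ : ∃ m, i = 2*m := ⟨i/2, by omega⟩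
    obtain ⟨m', rfl⟩ : ∃ m', j = 2*m' := ⟨j/2, by omega⟩
    have ha : w ⟨2*k, by omega⟩ = t (m + k) := by
      refine (occ_apply hi (2*k) (by omega)).trans ?_
      have e : 2*m + 2*k = 2*(m+k) := by omega
      rw [e, t_mul2]
    have hb : w ⟨2*k, by omega⟩ = t (m' + k) := by
      refine (occ_apply hj (2*k) (by omega)).trans ?_
      have e : 2*m' + 2*k = 2*(m'+k) := by omega
      rw [e, t_mul2]
    have hia : t (2*m + (2*k+1)) = 1 - t (m+k) := by
      have e : 2*m + (2*k+1) = 2*(m+k)+1 := by omega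
      rw [e, t_mul2']
    have hja : t (2*m' + (2*k+1)) = 1 - t (m'+k) := by
      have e : 2*m' + (2*k+1) = 2*(m'+k)+1 := by omega
      rw [e, t_mul2']
    have l1 := t_le_one (m+k); have l2 := t_le_one (m'+k)
    omega
  obtain ⟨m, rfl⟩ : ∃ m, i = 2*m+1 := ⟨i/2, by omega⟩
  obtain ⟨m', rfl⟩ : ∃ m', j = 2*m'+1 := ⟨j/2, by omega⟩
  have key : ∀ (m₀ : ℕ) (h : Occ (2*k+1) w (2*m₀+1)),
      w ⟨0, by omega⟩ = 1 - t m₀ ∧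
      (∀ l (h1 : 1+2*l < 2*k+1) (h2 : 2+2*l < 2*k+1),
        w ⟨1+2*l, h1⟩ = t (m₀+1+l) ∧ w ⟨2+2*l, h2⟩ = 1 - t (m₀+1+l)) := by
    intro m₀ h
    refine ⟨?_, ?_⟩
    · have h00 : w ⟨0, by omega⟩ = t (2*m₀+1) := occ_apply' h 0 (by omega) (by omega)
      rw [h00, t_mul2']
    · intro l h1 h2
      constructor
      · refine (occ_apply h (1+2*l) h1).trans ?_
        have e : 2*m₀+1 + (1+2*l) = 2*(m₀+1+l) := by omega
        rw [e, t_mul2]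
      · refine (occ_apply h (2+2*l) h2).trans ?_
        have e : 2*m₀+1 + (2+2*l) = 2*(m₀+1+l)+1 := by omega
        rw [e, t_mul2']
  have ext0 : t (m+1+k) = 0 := by
    have e : 2*m+1 + (2*k+1) = 2*(m+1+k) := by omega
    rw [e, t_mul2] at hi0
    exact t_shift hi0 (by omega)
  have ext1 : t (m'+1+k) = 1 := by
    have e : 2*m'+1 + (2*k+1) = 2*(m'+1+k) := by omega
    rw [e, t_mul2] at hj1
    exact t_shift hj1 (by omega)
  exact ⟨m, m', ⟨(key m hi).1, (key m hi).2, ext0⟩, ⟨(key m' hj).1, (key m' hj).2, ext1⟩⟩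

lemma RS_odd_le {k : ℕ} (hk : 2 ≤ k) : (RS (2*k+1)).ncard ≤ (QS k).ncard := by
  refine Set.ncard_le_ncard_of_injOn
    (fun w => (1 - w ⟨0, by omega⟩, fun l : Fin k => w ⟨1+2*(l : ℕ), by have := l.2; omega⟩))
    ?_ ?_ (QS_finite k)
  · intro w hw
    obtain ⟨m, m', ⟨ha0, ham, hax⟩, ⟨hb0, hbm, hbx⟩⟩ := RS_odd_occ hk hw
    have t1 := t_le_one m; have t2 := t_le_one m'
    refine ⟨⟨m, ?_, ?_, hax⟩, ⟨m', ?_, ?_, hbx⟩⟩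
    · show t m = 1 - w ⟨0, by omega⟩
      omega
    · intro l
      exact (ham l (by have := l.2; omega) (by have := l.2; omega)).1
    · show t m' = 1 - w ⟨0, by omega⟩
      omega
    · intro l
      exact (hbm l (by have := l.2; omega) (by have := l.2; omega)).1
  · intro w hw w' hw' heq
    obtain ⟨m, m', ⟨ha0, ham, -⟩, -⟩ := RS_odd_occ hk hw
    obtain ⟨n, n', ⟨hb0, hbn, -⟩, -⟩ := RS_odd_occ hk hw'
    have hfst : 1 - w ⟨0, by omega⟩ = 1 - w' ⟨0, by omega⟩ := congrArg Prod.fst heq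
    have hsnd : ∀ (l : ℕ) (h1 : 1+2*l < 2*k+1), w ⟨1+2*l, h1⟩ = w' ⟨1+2*l, h1⟩ := by
      intro l h1
      have := congrFun (congrArg Prod.snd heq) ⟨l, by omega⟩
      simpa using this
    have t1 := t_le_one m; have t2 := t_le_one n
    funext j
    obtain ⟨jv, hjv⟩ := j
    rcases Nat.even_or_odd jv with ⟨l, hl⟩ | ⟨l, hl⟩
    · rcases Nat.eq_zero_or_pos jv with h | h
      · subst h
        omega
      · have e : jv = 2+2*(l-1) := by omega
        subst e
        have a2 := (ham (l-1) (by omega) (by omega)).2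
        have a1 := (ham (l-1) (by omega) (by omega)).1
        have b2 := (hbn (l-1) (by omega) (by omega)).2
        have b1 := (hbn (l-1) (by omega) (by omega)).1
        have := hsnd (l-1) (by omega)
        omega
    · have e : jv = 1+2*l := by omega
      subst e
      exact hsnd l (by omega)

lemma fin_cast {m : ℕ} (v : Fin m → ℕ) {a b : ℕ} (ha : a < m) (hb : b < m) (e : a = b) :
    v ⟨a, ha⟩ = v ⟨b, hb⟩ := by subst e; rfl

lemma qs_parity {m : ℕ} (hm : 3 ≤ m) {c : ℕ} {v : Fin m → ℕ} {i j : ℕ}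
    (hci : t i = c) (hvi : Occ m v (i+1)) (hcj : t j = c) (hvj : Occ m v (j+1)) :
    i % 2 = j % 2 := by
  apply parity4'
  intro l hl
  rcases Nat.eq_zero_or_pos l with rfl | hp
  · rw [Nat.add_zero, Nat.add_zero, hci, hcj]
  · have e1 : v ⟨l-1, by omega⟩ = t (i + l) := occ_apply' hvi (l-1) (by omega) (by omega)
    have e2 : v ⟨l-1, by omega⟩ = t (j + l) := occ_apply' hvj (l-1) (by omega) (by omega)
    rw [← e1, e2]

lemma QS_even_occ {k : ℕ} (hk : 2 ≤ k) {c : ℕ} {v : Fin (2*k) → ℕ}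
    (hw : (c, v) ∈ QS (2*k)) :
    ∃ m m',
      ((t m = 1 - c ∧ c ≤ 1 ∧
        (∀ l (h1 : 2*l < 2*k) (h2 : 2*l+1 < 2*k),
          v ⟨2*l, h1⟩ = t (m+1+l) ∧ v ⟨2*l+1, h2⟩ = 1 - t (m+1+l)) ∧
        t (m+1+k) = 0)) ∧
      ((t m' = 1 - c ∧
        (∀ l (h1 : 2*l < 2*k) (h2 : 2*l+1 < 2*k),
          v ⟨2*l, h1⟩ = t (m'+1+l) ∧ v ⟨2*l+1, h2⟩ = 1 - t (m'+1+l)) ∧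
        t (m'+1+k) = 1)) := by
  obtain ⟨⟨i, hci, hvi, hx0⟩, ⟨j, hcj, hvj, hx1⟩⟩ := hw
  have hp : i % 2 = j % 2 := qs_parity (by omega) hci hvi hcj hvj
  have hodd : i % 2 ≠ 0 := by
    intro h
    obtain ⟨m, rfl⟩ : ∃ m, i = 2*m := ⟨i/2, by omega⟩
    obtain ⟨m', rfl⟩ : ∃ m', j = 2*m' := ⟨j/2, by omega⟩
    have ha : v ⟨2*k-1, by omega⟩ = t (m + k) := by
      refine (occ_apply' hvi (2*k-1) (by omega) (by omega : (2*(m+k) : ℕ) = _)).trans ?_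
      exact t_mul2 (m+k)
    have hb : v ⟨2*k-1, by omega⟩ = t (m' + k) := by
      refine (occ_apply' hvj (2*k-1) (by omega) (by omega : (2*(m'+k) : ℕ) = _)).trans ?_
      exact t_mul2 (m'+k)
    have hia : t (2*m + 1 + 2*k) = 1 - t (m+k) := by
      have e : 2*m + 1 + 2*k = 2*(m+k)+1 := by omega
      rw [e, t_mul2']
    have hja : t (2*m' + 1 + 2*k) = 1 - t (m'+k) := by
      have e : 2*m' + 1 + 2*k = 2*(m'+k)+1 := by omega
      rw [e, t_mul2']
    have l1 := t_le_one (m+k); have l2 := t_le_one (m'+k)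
    omega
  obtain ⟨m, rfl⟩ : ∃ m, i = 2*m+1 := ⟨i/2, by omega⟩
  obtain ⟨m', rfl⟩ : ∃ m', j = 2*m'+1 := ⟨j/2, by omega⟩
  have key : ∀ (m₀ : ℕ) (hc : t (2*m₀+1) = c) (h : Occ (2*k) v (2*m₀+1+1)),
      t m₀ = 1 - c ∧ c ≤ 1 ∧
      (∀ l (h1 : 2*l < 2*k) (h2 : 2*l+1 < 2*k),
        v ⟨2*l, h1⟩ = t (m₀+1+l) ∧ v ⟨2*l+1, h2⟩ = 1 - t (m₀+1+l)) := by
    intro m₀ hc h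
    have e := t_mul2' m₀
    have l1 := t_le_one m₀
    refine ⟨by omega, by omega, ?_⟩
    intro l h1 h2
    constructor
    · refine (occ_apply h (2*l) h1).trans ?_
      have e2 : 2*m₀+1+1 + 2*l = 2*(m₀+1+l) := by omega
      rw [e2, t_mul2]
    · refine (occ_apply h (2*l+1) h2).trans ?_
      have e2 : 2*m₀+1+1 + (2*l+1) = 2*(m₀+1+l)+1 := by omega
      rw [e2, t_mul2']
  have ext0 : t (m+1+k) = 0 := by
    have e : 2*m+1 + 1 + 2*k = 2*(m+1+k) := by omega
    rw [e, t_mul2] at hx0; exact hx0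
  have ext1 : t (m'+1+k) = 1 := by
    have e : 2*m'+1 + 1 + 2*k = 2*(m'+1+k) := by omega
    rw [e, t_mul2] at hx1; exact hx1
  exact ⟨m, m', ⟨(key m hci hvi).1, (key m hci hvi).2.1, (key m hci hvi).2.2, ext0⟩,
    ⟨(key m' hcj hvj).1, (key m' hcj hvj).2.2, ext1⟩⟩

lemma QS_even_le {k : ℕ} (hk : 2 ≤ k) : (QS (2*k)).ncard ≤ (QS k).ncard := by
  refine Set.ncard_le_ncard_of_injOn
    (fun p => (1 - p.1, fun l : Fin k => p.2 ⟨2*(l : ℕ), by have := l.2; omega⟩))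
    ?_ ?_ (QS_finite k)
  · rintro ⟨c, v⟩ hw
    obtain ⟨m, m', ⟨ha0, hc1, ham, hax⟩, ⟨hb0, hbm, hbx⟩⟩ := QS_even_occ hk hw
    refine ⟨⟨m, ?_, ?_, hax⟩, ⟨m', ?_, ?_, hbx⟩⟩
    · show t m = 1 - c
      exact ha0
    · intro l
      exact (ham l (by have := l.2; omega) (by have := l.2; omega)).1
    · show t m' = 1 - c
      exact hb0
    · intro l
      exact (hbm l (by have := l.2; omega) (by have := l.2; omega)).1
  · rintro ⟨c, v⟩ hw ⟨c', v'⟩ hw' heq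
    obtain ⟨m, m', ⟨ha0, hc1, ham, -⟩, -⟩ := QS_even_occ hk hw
    obtain ⟨n, n', ⟨hb0, hc1', hbn, -⟩, -⟩ := QS_even_occ hk hw'
    have hfst : 1 - c = 1 - c' := congrArg Prod.fst heq
    have hceq : c = c' := by omega
    have hsnd : ∀ (l : ℕ) (h1 : 2*l < 2*k), v ⟨2*l, h1⟩ = v' ⟨2*l, h1⟩ := by
      intro l h1
      have := congrFun (congrArg Prod.snd heq) ⟨l, by omega⟩
      simpa using this
    subst hceq
    have : v = v' := by
      funext j
      obtain ⟨jv, hjv⟩ := j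
      rcases Nat.even_or_odd jv with ⟨l, hl⟩ | ⟨l, hl⟩
      · have e : jv = 2*l := by omega
        subst e
        exact hsnd l (by omega)
      · have e : jv = 2*l+1 := by omega
        subst e
        have a1 := (ham l (by omega) (by omega)).1
        have a2 := (ham l (by omega) (by omega)).2
        have b1 := (hbn l (by omega) (by omega)).1
        have b2 := (hbn l (by omega) (by omega)).2
        have := hsnd l (by omega)
        omega
    rw [this]

lemma QS_odd_occ {k : ℕ} (hk : 1 ≤ k) {c : ℕ} {v : Fin (2*k+1) → ℕ}
    (hw : (c, v) ∈ QS (2*k+1)) :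
    ∃ m m',
      ((t m = c ∧
        (∀ l (h1 : 2*l < 2*k+1), v ⟨2*l, h1⟩ = 1 - t (m+l)) ∧
        (∀ l (h2 : 2*l+1 < 2*k+1), v ⟨2*l+1, h2⟩ = t (m+1+l)) ∧
        t (m+(k+1)) = 0)) ∧
      ((t m' = c ∧
        (∀ l (h1 : 2*l < 2*k+1), v ⟨2*l, h1⟩ = 1 - t (m'+l)) ∧
        (∀ l (h2 : 2*l+1 < 2*k+1), v ⟨2*l+1, h2⟩ = t (m'+1+l)) ∧
        t (m'+(k+1)) = 1)) := by
  obtain ⟨⟨i, hci, hvi, hx0⟩, ⟨j, hcj, hvj, hx1⟩⟩ := hw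
  have hp : i % 2 = j % 2 := qs_parity (by omega) hci hvi hcj hvj
  have hodd : i % 2 ≠ 1 := by
    intro h
    obtain ⟨m, rfl⟩ : ∃ m, i = 2*m+1 := ⟨i/2, by omega⟩
    obtain ⟨m', rfl⟩ : ∃ m', j = 2*m'+1 := ⟨j/2, by omega⟩
    have ha : v ⟨2*k, by omega⟩ = t (m+k+1) := by
      refine (occ_apply' hvi (2*k) (by omega) (by omega : (2*(m+k+1) : ℕ) = _)).trans ?_
      exact t_mul2 (m+k+1)
    have hb : v ⟨2*k, by omega⟩ = t (m'+k+1) := by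
      refine (occ_apply' hvj (2*k) (by omega) (by omega : (2*(m'+k+1) : ℕ) = _)).trans ?_
      exact t_mul2 (m'+k+1)
    have hia : t (2*m+1 + 1 + (2*k+1)) = 1 - t (m+k+1) := by
      have e : 2*m+1 + 1 + (2*k+1) = 2*(m+k+1)+1 := by omega
      rw [e, t_mul2']
    have hja : t (2*m'+1 + 1 + (2*k+1)) = 1 - t (m'+k+1) := by
      have e : 2*m'+1 + 1 + (2*k+1) = 2*(m'+k+1)+1 := by omega
      rw [e, t_mul2']
    have l1 := t_le_one (m+k+1); have l2 := t_le_one (m'+k+1)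
    omega
  obtain ⟨m, rfl⟩ : ∃ m, i = 2*m := ⟨i/2, by omega⟩
  obtain ⟨m', rfl⟩ : ∃ m', j = 2*m' := ⟨j/2, by omega⟩
  have key : ∀ (m₀ : ℕ) (hc : t (2*m₀) = c) (h : Occ (2*k+1) v (2*m₀+1)),
      t m₀ = c ∧
      (∀ l (h1 : 2*l < 2*k+1), v ⟨2*l, h1⟩ = 1 - t (m₀+l)) ∧
      (∀ l (h2 : 2*l+1 < 2*k+1), v ⟨2*l+1, h2⟩ = t (m₀+1+l)) := by
    intro m₀ hc h
    refine ⟨by rw [← t_mul2 m₀]; exact hc, ?_, ?_⟩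
    · intro l h1
      refine (occ_apply h (2*l) h1).trans ?_
      have e2 : 2*m₀+1 + 2*l = 2*(m₀+l)+1 := by omega
      rw [e2, t_mul2']
    · intro l h2
      refine (occ_apply h (2*l+1) h2).trans ?_
      have e2 : 2*m₀+1 + (2*l+1) = 2*(m₀+1+l) := by omega
      rw [e2, t_mul2]
  have ext0 : t (m+(k+1)) = 0 := by
    have e : 2*m + 1 + (2*k+1) = 2*(m+(k+1)) := by omega
    rw [e, t_mul2] at hx0; exact hx0
  have ext1 : t (m'+(k+1)) = 1 := by
    have e : 2*m' + 1 + (2*k+1) = 2*(m'+(k+1)) := by omega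
    rw [e, t_mul2] at hx1; exact hx1
  exact ⟨m, m', ⟨(key m hci hvi).1, (key m hci hvi).2.1, (key m hci hvi).2.2, ext0⟩,
    ⟨(key m' hcj hvj).1, (key m' hcj hvj).2.1, (key m' hcj hvj).2.2, ext1⟩⟩

lemma QS_odd_le {k : ℕ} (hk : 1 ≤ k) : (QS (2*k+1)).ncard ≤ (RS (k+1)).ncard := by
  refine Set.ncard_le_ncard_of_injOn
    (fun p => fun l : Fin (k+1) =>
      if h : (l : ℕ) = 0 then p.1 else p.2 ⟨2*(l : ℕ) - 1, by have := l.2; omega⟩)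
    ?_ ?_ (RS_finite (k+1))
  · rintro ⟨c, v⟩ hw
    obtain ⟨m, m', ⟨ha0, hae, hao, hax⟩, ⟨hb0, hbe, hbo, hbx⟩⟩ := QS_odd_occ hk hw
    have hocc : ∀ (m₀ : ℕ), t m₀ = c →
        (∀ l (h2 : 2*l+1 < 2*k+1), v ⟨2*l+1, h2⟩ = t (m₀+1+l)) →
        Occ (k+1) (fun l : Fin (k+1) =>
          if h : (l : ℕ) = 0 then c else v ⟨2*(l : ℕ) - 1, by have := l.2; omega⟩) m₀ := by
      intro m₀ hc ho jj
      obtain ⟨lv, hlv⟩ := jj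
      rcases Nat.eq_zero_or_pos lv with rfl | hpos
      · simpa using hc.symm
      · have e : (⟨2*lv - 1, by omega⟩ : Fin (2*k+1)) = ⟨2*(lv-1)+1, by omega⟩ :=
          Fin.ext (by simp; omega)
        simp only [show ¬(lv = 0) from by omega, dif_neg, not_false_iff]
        rw [e, ho (lv-1) (by omega)]
        congr 1
        omega
    exact ⟨⟨m, hocc m ha0 hao, hax⟩, ⟨m', hocc m' hb0 hbo, hbx⟩⟩
  · rintro ⟨c, v⟩ hw ⟨c', v'⟩ hw' heq
    obtain ⟨m, m', ⟨ha0, hae, hao, -⟩, -⟩ := QS_odd_occ hk hw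
    obtain ⟨n, n', ⟨hb0, hbe, hbo, -⟩, -⟩ := QS_odd_occ hk hw'
    have happ : ∀ (lv : ℕ) (hlv : lv < k+1),
        (if h : lv = 0 then c else v ⟨2*lv - 1, by omega⟩) =
        (if h : lv = 0 then c' else v' ⟨2*lv - 1, by omega⟩) := by
      intro lv hlv
      have := congrFun heq ⟨lv, hlv⟩
      simpa using this
    have hceq : c = c' := by simpa using happ 0 (by omega)
    have hvodd : ∀ (l : ℕ) (h2 : 2*l+1 < 2*k+1), v ⟨2*l+1, h2⟩ = v' ⟨2*l+1, h2⟩ := by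
      intro l h2
      have h3 := happ (l+1) (by omega)
      rw [dif_neg (by omega), dif_neg (by omega)] at h3
      have e : (⟨2*(l+1) - 1, by omega⟩ : Fin (2*k+1)) = ⟨2*l+1, h2⟩ :=
        Fin.ext (by simp; omega)
      rwa [e] at h3
    have hveq : v = v' := by
      funext jj
      obtain ⟨jv, hjv⟩ := jj
      rcases Nat.even_or_odd jv with ⟨l, hl⟩ | ⟨l, hl⟩
      · have e : jv = 2*l := by omega
        subst e
        have a1 := hae l (by omega)
        have b1 := hbe l (by omega)
        rcases Nat.eq_zero_or_pos l with rfl | hpos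
        · have u1 : t (m+0) = c := by rw [Nat.add_zero]; exact ha0
          have u2 : t (n+0) = c' := by rw [Nat.add_zero]; exact hb0
          omega
        · have a2 : v ⟨2*(l-1)+1, by omega⟩ = t (m+l) :=
            (hao (l-1) (by omega)).trans (by rw [show m+1+(l-1) = m+l from by omega])
          have b2 : v' ⟨2*(l-1)+1, by omega⟩ = t (n+l) :=
            (hbo (l-1) (by omega)).trans (by rw [show n+1+(l-1) = n+l from by omega])
          have hv2 := hvodd (l-1) (by omega)
          omega
      · have e : jv = 2*l+1 := by omega
        subst e
        exact hvodd l (by omega)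
    rw [hceq, hveq]

lemma bound : ∀ n, 1 ≤ n → (RS n).ncard ≤ 4 ∧ (QS n).ncard ≤ 4 := by
  intro n
  induction n using Nat.strong_induction_on with
  | _ n ih =>
    intro hn
    rcases (by omega : n = 1 ∨ n = 2 ∨ n = 3 ∨ 4 ≤ n) with rfl | rfl | rfl | h4
    · exact ⟨RS1_bound, QS1_bound⟩
    · exact ⟨RS2_bound, QS2_bound⟩
    · refine ⟨RS3_bound, ?_⟩
      have h2 : QS 3 = QS (2*1+1) := by norm_num
      rw [h2]
      exact (QS_odd_le (by omega)).trans ((ih 2 (by omega) (by omega)).1)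
    · rcases Nat.even_or_odd n with ⟨k, hk⟩ | ⟨k, hk⟩
      · have hn2 : n = 2*k := by omega
        subst hn2
        have hk2 : 2 ≤ k := by omega
        exact ⟨(RS_even_le hk2).trans (ih k (by omega) (by omega)).1,
               (QS_even_le hk2).trans (ih k (by omega) (by omega)).2⟩
      · have hn2 : n = 2*k+1 := by omega
        subst hn2
        have hk2 : 2 ≤ k := by omega
        exact ⟨(RS_odd_le hk2).trans (ih k (by omega) (by omega)).2,
               (QS_odd_le (by omega)).trans (ih (k+1) (by omega) (by omega)).1⟩

lemma step (n : ℕ) : (F (n+1)).ncard ≤ (F n).ncard + (RS n).ncard := by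
  classical
  let π : (Fin (n+1) → ℕ) → (Fin n → ℕ) :=
    fun w => fun l : Fin n => w ⟨(l : ℕ), by have := l.2; omega⟩
  let C0 : Set (Fin (n+1) → ℕ) := {w | w ∈ F (n+1) ∧ w ⟨n, by omega⟩ = 0}
  let C1 : Set (Fin (n+1) → ℕ) := {w | w ∈ F (n+1) ∧ w ⟨n, by omega⟩ = 1}
  have hsplit : F (n+1) = C0 ∪ C1 := by
    ext w
    constructor
    · rintro ⟨i, hi⟩
      have h := occ_apply hi n (by omega)
      have := t_le_one (i + n)
      rcases (by omega : w ⟨n, by omega⟩ = 0 ∨ w ⟨n, by omega⟩ = 1) with h' | h'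
      · exact Or.inl ⟨⟨i, hi⟩, h'⟩
      · exact Or.inr ⟨⟨i, hi⟩, h'⟩
    · rintro (⟨h, -⟩ | ⟨h, -⟩) <;> exact h
  have hinj : ∀ b : ℕ, Set.InjOn π {w | w ∈ F (n+1) ∧ w ⟨n, by omega⟩ = b} := by
    intro b w hw w' hw' heq
    funext j
    obtain ⟨jv, hjv⟩ := j
    rcases (by omega : jv < n ∨ jv = n) with h | h
    · have := congrFun heq ⟨jv, h⟩
      simpa using this
    · subst h
      rw [hw.2, hw'.2]
  have himg : ∀ b : ℕ, π '' {w | w ∈ F (n+1) ∧ w ⟨n, by omega⟩ = b} ⊆ F n := by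
    rintro b v ⟨w, ⟨⟨i, hi⟩, -⟩, rfl⟩
    refine ⟨i, ?_⟩
    intro j
    exact hi ⟨(j : ℕ), by have := j.2; omega⟩
  have hint : π '' C0 ∩ π '' C1 ⊆ RS n := by
    rintro v ⟨⟨w, ⟨⟨i, hi⟩, hb⟩, rfl⟩, ⟨w', ⟨⟨i', hi'⟩, hb'⟩, heq'⟩⟩
    constructor
    · refine ⟨i, ?_, ?_⟩
      · intro j; exact hi ⟨(j : ℕ), by have := j.2; omega⟩
      · rw [← occ_apply hi n (by omega), hb]
    · refine ⟨i', ?_, ?_⟩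
      · intro j
        have := congrFun heq' j
        rw [← this]
        exact hi' ⟨(j : ℕ), by have := j.2; omega⟩
      · rw [← occ_apply hi' n (by omega), hb']
  have hfinC0 : C0.Finite := (F_finite (n+1)).subset (fun w hw => hw.1)
  have hfinC1 : C1.Finite := (F_finite (n+1)).subset (fun w hw => hw.1)
  calc (F (n+1)).ncard = (C0 ∪ C1).ncard := by rw [hsplit]
    _ ≤ C0.ncard + C1.ncard := Set.ncard_union_le _ _
    _ = (π '' C0).ncard + (π '' C1).ncard := by
        rw [Set.ncard_image_of_injOn (hinj 0), Set.ncard_image_of_injOn (hinj 1)]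
    _ = ((π '' C0) ∪ (π '' C1)).ncard + ((π '' C0) ∩ (π '' C1)).ncard :=
        (Set.ncard_union_add_ncard_inter _ _ (hfinC0.image π) (hfinC1.image π)).symm
    _ ≤ (F n).ncard + (RS n).ncard := by
        exact add_le_add
          (Set.ncard_le_ncard (Set.union_subset (himg 0) (himg 1)) (F_finite n))
          (Set.ncard_le_ncard hint (RS_finite n))

end TM


/-- For all `n ≥ 1`, the subword complexity of the Thue–Morse word satisfies
`p_t(n+1) − p_t(n) ≤ 4`. -/
theorem thueMorse_complexity_first_difference_le_four (n : ℕ) (hn : 1 ≤ n) :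
    (complexity thueMorse (n + 1) : ℤ) - complexity thueMorse n ≤ 4 := by
  have h1 : complexity thueMorse (n+1) = (TM.F (n+1)).ncard := rfl
  have h2 : complexity thueMorse n = (TM.F n).ncard := rfl
  have h3 := TM.step n
  have h4 := (TM.bound n hn).1
  have h5 : complexity thueMorse (n+1) ≤ complexity thueMorse n + 4 := by omega
  have h6 : (complexity thueMorse (n+1) : ℤ) ≤ (complexity thueMorse n : ℤ) + 4 := by
    exact_mod_cast h5
  omega
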